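/- Č(P,S) equals S + {t·(p − s) : t ≥ 0, p ∈ P, s ∈ S}; in particular Č(P,S) is a convex set containing P. -/

import Mathlib

open scoped Pointwise

/-- The ray based at `s` in direction `d`. -/
def ray {m : ℕ} (s d : Fin m → ℝ) : Set (Fin m → ℝ) :=
  {x | ∃ t : ℝ, 0 ≤ t ∧ x = s + t • d}

/-- The tropical completion `Č(P,S)` of `S` in `P`: the union of `S` together with all rays
based at points of `S` that intersect `P` in more than one point. -/
def tropicalCompletion {m : ℕ} (P S : Set (Fin m → ℝ)) : Set (Fin m → ℝ) :=
  S ∪ ⋃ (s ∈ S) (d : Fin m → ℝ)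
      (_ : ∃ p ∈ ray s d ∩ P, ∃ q ∈ ray s d ∩ P, p ≠ q), ray s d

/-- For convex `P ⊆ ℝᵐ` and nonempty convex `S ⊆ P`, the tropical completion
`Č(P,S)` equals the Minkowski sum `S + {t·(p − s) : t ≥ 0, p ∈ P, s ∈ S}`; in particular it
is convex and contains `P`. -/
theorem tropicalCompletion_eq_add {m : ℕ} (P S : Set (Fin m → ℝ))
    (hP : Convex ℝ P) (hS : Convex ℝ S) (hSne : S.Nonempty) (hSP : S ⊆ P) :
    tropicalCompletion P S
        = S + {x | ∃ t : ℝ, 0 ≤ t ∧ ∃ p ∈ P, ∃ s ∈ S, x = t • (p - s)} ∧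
      Convex ℝ (tropicalCompletion P S) ∧ P ⊆ tropicalCompletion P S := by
  obtain ⟨s₀, hs₀⟩ := hSne
  set D : Set (Fin m → ℝ) := {x | ∃ t : ℝ, 0 ≤ t ∧ ∃ p ∈ P, ∃ s ∈ S, x = t • (p - s)} with hD
  have hDconv : Convex ℝ D := by
    intro x hx y hy a b ha hb hab
    obtain ⟨t1, ht1, p1, hp1, s1, hs1, rfl⟩ := hx
    obtain ⟨t2, ht2, p2, hp2, s2, hs2, rfl⟩ := hy
    set T : ℝ := a * t1 + b * t2 with hT
    rcases eq_or_lt_of_le (by positivity : (0:ℝ) ≤ T) with h0 | hpos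
    · refine ⟨0, le_refl _, s₀, hSP hs₀, s₀, hs₀, ?_⟩
      have ha1 : a * t1 = 0 := by nlinarith
      have hb1 : b * t2 = 0 := by nlinarith
      rw [smul_smul, smul_smul, ha1, hb1]; simp
    · have hTne : T ≠ 0 := ne_of_gt hpos
      refine ⟨T, le_of_lt hpos, (a*t1/T) • p1 + (b*t2/T) • p2,
        hP hp1 hp2 (by positivity) (by positivity) (by field_simp; exact hT.symm),
        (a*t1/T) • s1 + (b*t2/T) • s2,
        hS hs1 hs2 (by positivity) (by positivity) (by field_simp; exact hT.symm), ?_⟩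
      match_scalars <;> field_simp <;> ring
  have heq : tropicalCompletion P S = S + D := by
    ext x
    constructor
    · rintro (hx | hx)
      · exact ⟨x, hx, 0, ⟨0, le_refl _, s₀, hSP hs₀, s₀, hs₀, by simp⟩, add_zero x⟩
      · simp only [Set.mem_iUnion] at hx
        obtain ⟨s, hs, d, ⟨p, ⟨⟨tp, htp, rfl⟩, hpP⟩, q, ⟨⟨tq, htq, rfl⟩, hqP⟩, hpq⟩, t, ht, rfl⟩ := hx
        have key : ∀ r : ℝ, 0 < r → s + r • d ∈ P → s + t • d ∈ S + D := by
          intro r hr hrP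
          refine ⟨s, hs, t • d, ⟨t / r, by positivity, s + r • d, hrP, s, hs, ?_⟩, rfl⟩
          rw [add_sub_cancel_left, smul_smul, div_mul_cancel₀ _ (ne_of_gt hr)]
        have hne : tp ≠ tq := by rintro rfl; exact hpq rfl
        rcases lt_or_gt_of_ne hne with h | h
        · exact key tq (lt_of_le_of_lt htp h) hqP
        · exact key tp (lt_of_le_of_lt htq h) hpP
    · rintro ⟨s', hs', _, ⟨t, ht, p, hp, s, hsS, rfl⟩, rfl⟩
      by_cases hx : s' + t • (p - s) ∈ S
      · exact Or.inl hx
      · right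
        simp only [Set.mem_iUnion]
        have hpos : (0:ℝ) < 1 + t := by linarith
        refine ⟨s, hsS, s' + t • (p - s) - s, ⟨s, ⟨⟨0, le_refl _, by simp⟩, hSP hsS⟩,
          s + (1/(1+t)) • (s' + t • (p - s) - s), ⟨⟨1/(1+t), by positivity, rfl⟩, ?_⟩, ?_⟩,
          1, zero_le_one, by simp⟩
        · have hre : s + (1/(1+t)) • (s' + t • (p - s) - s)
              = (1/(1+t)) • s' + (t/(1+t)) • p := by
            match_scalars <;> field_simp <;> ring
          rw [hre]
          exact hP (hSP hs') hp (by positivity) (by positivity) (by field_simp)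
        · intro heq2
          have h0 := left_eq_add.mp heq2
          rcases smul_eq_zero.mp h0 with hc | hxs
          · exact absurd hc (by positivity : (0:ℝ) < 1/(1+t)).ne'
          · refine hx ?_
            rw [sub_eq_zero] at hxs
            rw [hxs]; exact hsS
  refine ⟨heq, ?_, ?_⟩
  · rw [heq]; exact hS.add hDconv
  · intro p hp
    rw [heq]
    exact ⟨s₀, hs₀, p - s₀, ⟨1, zero_le_one, p, hp, s₀, hs₀, (one_smul _ _).symm⟩, by module⟩
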